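/- Let p be a prime, let G and H be finite-dimensional vector spaces over 𝔽_p, let δ ∈ (0,1], and let A ⊆ G × H be a transverse set with |A| ≥ δ|G||H|. Then there exists y₀ ∈ H such that |A_{·y₀}| ≥ (δ/2)|G| and |A_{x·}| ≥ (δ⁴/10⁴)|H| holds for every element x ∈ A_{·y₀}. -/
import Mathlib

/-- Auxiliary: casting a filter-card to a sum of real indicators. -/
lemma card_filter_eq_sum_ite {α : Type} (s : Finset α) (P : α → Prop) [DecidablePred P]
    (g : α → ℝ) (hg : ∀ a, g a = if P a then 1 else 0) :
    ((s.filter P).card : ℝ) = ∑ a ∈ s, g a := by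
  rw [← Finset.sum_boole]
  exact Finset.sum_congr rfl fun a _ => (hg a).symm

/-- Auxiliary: for two subgroups of a finite abelian group,
`|S1| * |S2| ≤ |S1 ⊓ S2| * |H|`. -/
lemma aux_inf_card {H : Type} [AddCommGroup H] [Finite H] (S1 S2 : AddSubgroup H) :
    Nat.card S1 * Nat.card S2 ≤ Nat.card ↥(S1 ⊓ S2) * Nat.card H := by
  have h1 := AddSubgroup.card_mul_index S1
  have h2 := AddSubgroup.card_mul_index S2
  have h12 := AddSubgroup.card_mul_index (S1 ⊓ S2)
  have hle : (S1 ⊓ S2).index ≤ S1.index * S2.index := AddSubgroup.index_inf_le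
  have hi2 : 0 < S2.index := Nat.pos_of_ne_zero AddSubgroup.index_ne_zero_of_finite
  have key : Nat.card S2 ≤ Nat.card ↥(S1 ⊓ S2) * S1.index := by
    have h : Nat.card S2 * S2.index ≤ (Nat.card ↥(S1 ⊓ S2) * S1.index) * S2.index := by
      calc Nat.card S2 * S2.index = Nat.card ↥(S1 ⊓ S2) * (S1 ⊓ S2).index := by rw [h2, h12]
        _ ≤ Nat.card ↥(S1 ⊓ S2) * (S1.index * S2.index) := Nat.mul_le_mul_left _ hle
        _ = (Nat.card ↥(S1 ⊓ S2) * S1.index) * S2.index := by ring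
    exact Nat.le_of_mul_le_mul_right h hi2
  calc Nat.card S1 * Nat.card S2 ≤ Nat.card S1 * (Nat.card ↥(S1 ⊓ S2) * S1.index) :=
        Nat.mul_le_mul_left _ key
    _ = Nat.card ↥(S1 ⊓ S2) * (Nat.card S1 * S1.index) := by ring
    _ = Nat.card ↥(S1 ⊓ S2) * Nat.card H := by rw [h1]

set_option maxHeartbeats 2000000 in
/-- A step in the proof of Lemma 13 of the paper: in a dense transverse set there is
a row `A_{·y₀}` of density at least `δ/2` all of whose elements index columns of
density at least `δ⁴/10⁴`. -/
theorem transverse_good_row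
    (p : ℕ) [Fact p.Prime]
    (G H : Type) [AddCommGroup G] [AddCommGroup H]
    [Module (ZMod p) G] [Module (ZMod p) H]
    [FiniteDimensional (ZMod p) G] [FiniteDimensional (ZMod p) H]
    [Finite G] [Finite H]
    (δ : ℝ) (hδ0 : 0 < δ) (hδ1 : δ ≤ 1)
    (A : Set (G × H))
    (hrow : ∀ x : G, ∃ S : Submodule (ZMod p) H, {y : H | (x, y) ∈ A} = ↑S)
    (hcol : ∀ y : H, ∃ S : Submodule (ZMod p) G, {x : G | (x, y) ∈ A} = ↑S)
    (hdense : (Nat.card A : ℝ) ≥ δ * Nat.card G * Nat.card H) :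
    ∃ y₀ : H,
      (Nat.card {x : G | (x, y₀) ∈ A} : ℝ) ≥ (δ / 2) * Nat.card G ∧
      ∀ x : G, (x, y₀) ∈ A →
        (Nat.card {y : H | (x, y) ∈ A} : ℝ) ≥ (δ ^ 4 / 10 ^ 4) * Nat.card H := by
  classical
  cases nonempty_fintype G
  cases nonempty_fintype H
  have hNGpos : (0:ℝ) < Nat.card G := by exact_mod_cast Nat.card_pos
  have hNHpos : (0:ℝ) < Nat.card H := by exact_mod_cast Nat.card_pos
  set NG : ℝ := (Nat.card G : ℝ) with hNGdef
  set NH : ℝ := (Nat.card H : ℝ) with hNHdef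
  set f : G → H → ℝ := fun x y => if (x, y) ∈ A then 1 else 0 with hf
  have hfval : ∀ x y, f x y = if (x, y) ∈ A then 1 else 0 := fun x y => rfl
  have hf0 : ∀ x y, 0 ≤ f x y := by
    intro x y; rw [hfval]; by_cases h : (x, y) ∈ A <;> simp [h]
  -- row cardinalities as sums
  have hrowcard : ∀ x : G, (Nat.card {y : H | (x, y) ∈ A} : ℝ) = ∑ y, f x y := by
    intro x
    have h1 : {y : H | (x, y) ∈ A}.toFinset
        = Finset.univ.filter (fun y => (x, y) ∈ A) := by ext y; simp
    rw [Nat.card_coe_set_eq, Set.ncard_eq_toFinset_card', h1]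
    exact card_filter_eq_sum_ite _ _ _ (fun y => hfval x y)
  -- column cardinalities as sums
  have hcolcard : ∀ y : H, (Nat.card {x : G | (x, y) ∈ A} : ℝ) = ∑ x, f x y := by
    intro y
    have h1 : {x : G | (x, y) ∈ A}.toFinset
        = Finset.univ.filter (fun x => (x, y) ∈ A) := by ext x; simp
    rw [Nat.card_coe_set_eq, Set.ncard_eq_toFinset_card', h1]
    exact card_filter_eq_sum_ite _ _ _ (fun x => hfval x y)
  -- total cardinality
  have hAcard : (Nat.card A : ℝ) = ∑ x, ∑ y, f x y := by
    have h1 : A.toFinset = Finset.univ.filter (· ∈ A) := by ext q; simp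
    rw [Nat.card_coe_set_eq, Set.ncard_eq_toFinset_card', h1,
      card_filter_eq_sum_ite _ _ (fun q : G × H => f q.1 q.2)
        (fun q => hfval q.1 q.2)]
    rw [Fintype.sum_prod_type]
  have hsumall : δ * NG * NH ≤ ∑ x, ∑ y, f x y := by rw [← hAcard]; exact hdense
  -- the set of heavy rows
  set W : Finset G := Finset.univ.filter (fun x => δ / 8 * NH ≤ ∑ y, f x y) with hW
  have h1 : ∑ x ∈ Wᶜ, ∑ y, f x y ≤ δ / 8 * NG * NH := by
    have hb : ∀ x ∈ Wᶜ, ∑ y, f x y ≤ δ / 8 * NH := by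
      intro x hx
      rw [Finset.mem_compl, hW, Finset.mem_filter] at hx
      push_neg at hx
      exact (hx (Finset.mem_univ x)).le
    calc ∑ x ∈ Wᶜ, ∑ y, f x y ≤ ∑ _x ∈ Wᶜ, δ / 8 * NH := Finset.sum_le_sum hb
      _ = (Wᶜ.card : ℝ) * (δ / 8 * NH) := by rw [Finset.sum_const, nsmul_eq_mul]
      _ ≤ NG * (δ / 8 * NH) := by
          have hc : (Wᶜ.card : ℝ) ≤ NG := by
            rw [hNGdef, Nat.card_eq_fintype_card]
            exact_mod_cast Finset.card_le_univ Wᶜ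
          have : (0:ℝ) ≤ δ / 8 * NH := by positivity
          exact mul_le_mul_of_nonneg_right hc this
      _ = δ / 8 * NG * NH := by ring
  have h2 : 7 * δ / 8 * NG * NH ≤ ∑ x ∈ W, ∑ y, f x y := by
    have := Finset.sum_compl_add_sum W (fun x => ∑ y, f x y)
    linarith
  -- the set of heavy columns
  set T : Finset H := Finset.univ.filter (fun y => δ / 2 * NG ≤ ∑ x, f x y) with hT
  have h3 : 3 * δ / 8 * NG * NH ≤ ∑ y ∈ T, ∑ x ∈ W, f x y := by
    have e1 : ∑ y, ∑ x ∈ W, f x y = ∑ x ∈ W, ∑ y, f x y := Finset.sum_comm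
    have e2 : ∑ y ∈ Tᶜ, ∑ x ∈ W, f x y ≤ δ / 2 * NG * NH := by
      have hb : ∀ y ∈ Tᶜ, ∑ x ∈ W, f x y ≤ δ / 2 * NG := by
        intro y hy
        rw [Finset.mem_compl, hT, Finset.mem_filter] at hy
        push_neg at hy
        have hle : ∑ x ∈ W, f x y ≤ ∑ x, f x y :=
          Finset.sum_le_sum_of_subset_of_nonneg (Finset.subset_univ W)
            (fun x _ _ => hf0 x y)
        exact hle.trans (hy (Finset.mem_univ y)).le
      calc ∑ y ∈ Tᶜ, ∑ x ∈ W, f x y ≤ ∑ _y ∈ Tᶜ, δ / 2 * NG := Finset.sum_le_sum hb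
        _ = (Tᶜ.card : ℝ) * (δ / 2 * NG) := by rw [Finset.sum_const, nsmul_eq_mul]
        _ ≤ NH * (δ / 2 * NG) := by
            have hc : (Tᶜ.card : ℝ) ≤ NH := by
              rw [hNHdef, Nat.card_eq_fintype_card]
              exact_mod_cast Finset.card_le_univ Tᶜ
            have : (0:ℝ) ≤ δ / 2 * NG := by positivity
            exact mul_le_mul_of_nonneg_right hc this
        _ = δ / 2 * NG * NH := by ring
    have := Finset.sum_compl_add_sum T (fun y => ∑ x ∈ W, f x y)
    rw [e1] at this
    linarith
  have h4 : ∑ y ∈ T, ∑ x ∈ Wᶜ, f x y ≤ δ / 8 * NG * NH := by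
    have e1 : ∑ y, ∑ x ∈ Wᶜ, f x y = ∑ x ∈ Wᶜ, ∑ y, f x y := Finset.sum_comm
    have hle : ∑ y ∈ T, ∑ x ∈ Wᶜ, f x y ≤ ∑ y, ∑ x ∈ Wᶜ, f x y :=
      Finset.sum_le_sum_of_subset_of_nonneg (Finset.subset_univ T)
        (fun y _ _ => Finset.sum_nonneg fun x _ => hf0 x y)
    rw [e1] at hle
    linarith
  have hlt : ∑ y ∈ T, ∑ x ∈ Wᶜ, f x y < ∑ y ∈ T, ∑ x ∈ W, f x y := by
    have hpos : 0 < NG * NH := mul_pos hNGpos hNHpos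
    nlinarith
  obtain ⟨y₀, hy₀T, hy₀lt⟩ := Finset.exists_lt_of_sum_lt hlt
  have hy₀col : δ / 2 * NG ≤ ∑ x, f x y₀ := by
    rw [hT, Finset.mem_filter] at hy₀T
    exact hy₀T.2
  refine ⟨y₀, ?_, ?_⟩
  · rw [ge_iff_le, hcolcard y₀]; exact hy₀col
  · intro x hx
    obtain ⟨V, hV⟩ := hcol y₀
    have hmemV : ∀ z, (z, y₀) ∈ A ↔ z ∈ V := fun z => by
      constructor
      · intro h; have : z ∈ (↑V : Set G) := hV ▸ h; exact this
      · intro h; have : z ∈ {x : G | (x, y₀) ∈ A} := by rw [hV]; exact h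
        exact this
    set VF : Finset G := Finset.univ.filter (fun z => (z, y₀) ∈ A) with hVF
    have hcw : ((VF ∩ W).card : ℝ) = ∑ x ∈ W, f x y₀ := by
      have he : VF ∩ W = W.filter (fun z => (z, y₀) ∈ A) := by
        ext z
        simp only [hVF, Finset.mem_inter, Finset.mem_filter, Finset.mem_univ, true_and]
        tauto
      rw [he]
      exact card_filter_eq_sum_ite _ _ _ (fun z => hfval z y₀)
    have hcb : ((VF \ W).card : ℝ) = ∑ x ∈ Wᶜ, f x y₀ := by
      have he : VF \ W = Wᶜ.filter (fun z => (z, y₀) ∈ A) := by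
        ext z
        simp only [hVF, Finset.mem_sdiff, Finset.mem_filter, Finset.mem_univ, true_and,
          Finset.mem_compl]
        tauto
      rw [he]
      exact card_filter_eq_sum_ite _ _ _ (fun z => hfval z y₀)
    have hcardlt : (VF \ W).card < (VF ∩ W).card := by
      have : ((VF \ W).card : ℝ) < ((VF ∩ W).card : ℝ) := by rw [hcw, hcb]; exact hy₀lt
      exact_mod_cast this
    have hsplit : (VF ∩ W).card + (VF \ W).card = VF.card :=
      Finset.card_inter_add_card_sdiff VF W
    set C : Finset G := VF ∩ W with hC
    set C' : Finset G := C.image (fun w => x - w) with hC'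
    have hC'card : C'.card = C.card := Finset.card_image_of_injective _ sub_right_injective
    have hCVF : C ⊆ VF := Finset.inter_subset_left
    have hC'sub : C' ⊆ VF := by
      intro z hz
      rw [hC', Finset.mem_image] at hz
      obtain ⟨w, hw, rfl⟩ := hz
      have hwA : (w, y₀) ∈ A := by
        have := hCVF hw
        rw [hVF, Finset.mem_filter] at this
        exact this.2
      have hwV : w ∈ V := (hmemV w).mp hwA
      have hxV : x ∈ V := (hmemV x).mp hx
      rw [hVF, Finset.mem_filter]
      exact ⟨Finset.mem_univ _, (hmemV _).mpr (sub_mem hxV hwV)⟩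
    have hnd : ¬ Disjoint C C' := by
      intro hd
      have hu := Finset.card_union_of_disjoint hd
      have hsub : C ∪ C' ⊆ VF := Finset.union_subset hCVF hC'sub
      have := Finset.card_le_card hsub
      omega
    obtain ⟨w₁, hw₁C, hw₁C'⟩ := Finset.not_disjoint_iff.mp hnd
    rw [hC', Finset.mem_image] at hw₁C'
    obtain ⟨w₂, hw₂C, hw₂eq⟩ := hw₁C'
    have hxsum : x = w₁ + w₂ := by rw [← hw₂eq]; abel
    have hWmem : ∀ w ∈ C, δ / 8 * NH ≤ (Nat.card {y : H | (w, y) ∈ A} : ℝ) := by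
      intro w hw
      have hwW : w ∈ W := (Finset.mem_inter.mp hw).2
      rw [hW, Finset.mem_filter] at hwW
      rw [hrowcard]
      exact hwW.2
    obtain ⟨S1, hS1⟩ := hrow w₁
    obtain ⟨S2, hS2⟩ := hrow w₂
    set T1 : AddSubgroup H := S1.toAddSubgroup with hT1
    set T2 : AddSubgroup H := S2.toAddSubgroup with hT2
    have hincl : ((T1 ⊓ T2 : AddSubgroup H) : Set H) ⊆ {y : H | (x, y) ∈ A} := by
      intro y hy
      rw [SetLike.mem_coe, AddSubgroup.mem_inf] at hy
      have hy1 : (w₁, y) ∈ A := by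
        have : y ∈ (↑S1 : Set H) := hy.1
        rw [← hS1] at this; exact this
      have hy2 : (w₂, y) ∈ A := by
        have : y ∈ (↑S2 : Set H) := hy.2
        rw [← hS2] at this; exact this
      obtain ⟨Vy, hVy⟩ := hcol y
      have hm1 : w₁ ∈ Vy := by
        have : w₁ ∈ (↑Vy : Set G) := hVy ▸ hy1; exact this
      have hm2 : w₂ ∈ Vy := by
        have : w₂ ∈ (↑Vy : Set G) := hVy ▸ hy2; exact this
      have : x ∈ (↑Vy : Set G) := by
        rw [hxsum]; exact add_mem hm1 hm2
      rw [← hVy] at this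
      exact this
    have hmono : Nat.card ↥((T1 ⊓ T2 : AddSubgroup H) : Set H)
        ≤ Nat.card {y : H | (x, y) ∈ A} := by
      rw [Nat.card_coe_set_eq, Nat.card_coe_set_eq]
      exact Set.ncard_le_ncard hincl (Set.toFinite _)
    have hcoe : Nat.card ↥((T1 ⊓ T2 : AddSubgroup H) : Set H) = Nat.card ↥(T1 ⊓ T2) := rfl
    have hcard1 : Nat.card {y : H | (w₁, y) ∈ A} = Nat.card T1 := by
      rw [hS1]; rfl
    have hcard2 : Nat.card {y : H | (w₂, y) ∈ A} = Nat.card T2 := by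
      rw [hS2]; rfl
    have hineq := aux_inf_card T1 T2
    -- now conclude with real arithmetic
    have hr1 : δ / 8 * NH ≤ (Nat.card T1 : ℝ) := by
      rw [← hcard1]; exact hWmem w₁ hw₁C
    have hr2 : δ / 8 * NH ≤ (Nat.card T2 : ℝ) := by
      rw [← hcard2]; exact hWmem w₂ hw₂C
    have hineqR : (Nat.card T1 : ℝ) * (Nat.card T2 : ℝ)
        ≤ (Nat.card ↥(T1 ⊓ T2) : ℝ) * NH := by
      rw [hNHdef]; exact_mod_cast hineq
    have hmonoR : (Nat.card ↥(T1 ⊓ T2) : ℝ) ≤ (Nat.card {y : H | (x, y) ∈ A} : ℝ) := by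
      rw [← hcoe]; exact_mod_cast hmono
    have hp1 : (δ / 8 * NH) * (δ / 8 * NH)
        ≤ (Nat.card T1 : ℝ) * (Nat.card T2 : ℝ) := by
      have h8 : (0:ℝ) ≤ δ / 8 * NH := by positivity
      exact mul_le_mul hr1 hr2 h8 (le_trans h8 hr1)
    have hI : δ ^ 2 / 64 * NH ≤ (Nat.card ↥(T1 ⊓ T2) : ℝ) := by
      nlinarith [hNHpos, hp1, hineqR]
    have hfinal : δ ^ 4 / 10 ^ 4 * NH ≤ δ ^ 2 / 64 * NH := by
      have hsq : δ ^ 2 ≤ 1 := by nlinarith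
      nlinarith [sq_nonneg δ, hNHpos.le, hsq]
    rw [ge_iff_le]
    calc δ ^ 4 / 10 ^ 4 * NH ≤ δ ^ 2 / 64 * NH := hfinal
      _ ≤ (Nat.card ↥(T1 ⊓ T2) : ℝ) := hI
      _ ≤ (Nat.card {y : H | (x, y) ∈ A} : ℝ) := hmonoR
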